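/- Let Γ, Λ, G be countable discrete groups with homomorphisms π : Γ → G, τ : Λ → G, let Γ' ≤ Γ and Λ' ≤ Λ be finite-index normal subgroups, and suppose the restriction τ|_{Λ'} : Λ' → G is ICC. Let (Σ, m) be an ME coupling of Γ and Λ, and let Φ : Σ → G be a Borel map satisfying Φ(γλx) = π(γ)Φ(x)τ(λ)⁻¹ for all γ ∈ Γ', λ ∈ Λ', and almost every x ∈ Σ. Then the same equivariance identity holds for all γ ∈ Γ and λ ∈ Λ, for almost every x ∈ Σ. -/
import Mathlib


open MeasureTheory

/-- An ME (measure equivalence) coupling of `Γ` and `Λ`: a measure-preserving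
action of `Γ × Λ` (encoded via `act : Γ → Λ → X → X`) on a σ-finite measure space,
with both restricted actions essentially free and admitting fundamental domains of
finite measure. -/
structure IsMECoupling (Γ Λ X : Type) [Group Γ] [Group Λ] [MeasurableSpace X]
    (m : Measure X) (act : Γ → Λ → X → X) : Prop where
  act_one : ∀ x, act 1 1 x = x
  act_mul : ∀ (g g' : Γ) (l l' : Λ) (x : X), act (g * g') (l * l') x = act g l (act g' l' x)
  measurable_act : ∀ g l, Measurable (act g l)
  measurePreserving : ∀ g l, MeasurePreserving (act g l) m m
  sigmaFinite : SigmaFinite m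
  free_left : ∀ᵐ x ∂m, ∀ g : Γ, g ≠ 1 → act g 1 x ≠ x
  free_right : ∀ᵐ x ∂m, ∀ l : Λ, l ≠ 1 → act 1 l x ≠ x
  exists_fundamentalDomain_left : ∃ Y : Set X, MeasurableSet Y ∧ m Y < ⊤ ∧
    (∀ᵐ x ∂m, ∃ g : Γ, act g 1 x ∈ Y) ∧
    ∀ g : Γ, g ≠ 1 → m (Y ∩ act g 1 ⁻¹' Y) = 0
  exists_fundamentalDomain_right : ∃ Z : Set X, MeasurableSet Z ∧ m Z < ⊤ ∧
    (∀ᵐ x ∂m, ∃ l : Λ, act 1 l x ∈ Z) ∧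
    ∀ l : Λ, l ≠ 1 → m (Z ∩ act 1 l ⁻¹' Z) = 0

/-- Two countable discrete groups are measure equivalent if they admit an ME coupling
on a standard Borel space. -/
def MeasureEquivalent (Γ Λ : Type) [Group Γ] [Countable Γ] [Group Λ] [Countable Λ] : Prop :=
  ∃ (X : Type) (i : MeasurableSpace X) (m : @Measure X i) (act : Γ → Λ → X → X),
    @StandardBorelSpace X i ∧ @IsMECoupling Γ Λ X _ _ i m act

/-- A homomorphism `π : Γ →* G` is ICC if every nonidentity element of `G` has an
infinite orbit under conjugation by elements of `π(Γ)`. -/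
def IsICC {Γ G : Type} [Group Γ] [Group G] (π : Γ →* G) : Prop :=
  ∀ g : G, g ≠ 1 → {h : G | ∃ γ : Γ, π γ * g * (π γ)⁻¹ = h}.Infinite

set_option linter.unusedSectionVars false

namespace MEAux

variable {Γ Λ G X : Type} [Group Γ] [Countable Γ] [Group Λ] [Countable Λ] [Group G]
  [MeasurableSpace X] {m : Measure X} {act : Γ → Λ → X → X}

theorem act_comp (hc : IsMECoupling Γ Λ X m act) (g g' : Γ) (l l' : Λ) (x : X) :
    act g l (act g' l' x) = act (g * g') (l * l') x := (hc.act_mul g g' l l' x).symm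

def actEquiv (hc : IsMECoupling Γ Λ X m act) (g : Γ) (l : Λ) : X ≃ᵐ X where
  toFun := act g l
  invFun := act g⁻¹ l⁻¹
  left_inv := fun x => by
    rw [act_comp hc, inv_mul_cancel, inv_mul_cancel, hc.act_one]
  right_inv := fun x => by
    rw [act_comp hc, mul_inv_cancel, mul_inv_cancel, hc.act_one]
  measurable_toFun := hc.measurable_act g l
  measurable_invFun := hc.measurable_act g⁻¹ l⁻¹

theorem measure_preimage_act (hc : IsMECoupling Γ Λ X m act) (g : Γ) (l : Λ) (S : Set X) :
    m (act g l ⁻¹' S) = m S :=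
  (hc.measurePreserving g l).measure_preimage_emb
    (actEquiv hc g l).measurableEmbedding S

theorem ae_act (hc : IsMECoupling Γ Λ X m act) (g : Γ) (l : Λ) {P : X → Prop}
    (h : ∀ᵐ y ∂m, P y) : ∀ᵐ x ∂m, P (act g l x) := by
  rw [ae_iff] at h ⊢
  exact (hc.measurePreserving g l).quasiMeasurePreserving.preimage_null h

theorem measure_eq_tsum_of_partition {ι : Type} [Countable ι] {C : ι → Set X}
    (hCm : ∀ i, MeasurableSet (C i)) (hd : Pairwise (Function.onFun (AEDisjoint m) C))
    (hcov : ∀ᵐ x ∂m, ∃ i, x ∈ C i) {S : Set X} (hS : MeasurableSet S) :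
    m S = ∑' i, m (S ∩ C i) := by
  have hUm : MeasurableSet (⋃ i, C i) := MeasurableSet.iUnion hCm
  have hU : m (S \ ⋃ i, C i) = 0 := by
    refine measure_mono_null (fun x hx => ?_) (ae_iff.1 hcov)
    simp only [Set.mem_setOf_eq, not_exists]
    intro i hi
    exact hx.2 (Set.mem_iUnion.2 ⟨i, hi⟩)
  have h1 : m S = m (S ∩ ⋃ i, C i) := by
    rw [← measure_inter_add_diff S hUm, hU, add_zero]
  rw [h1, Set.inter_iUnion, measure_iUnion₀]
  · exact fun i j hij => (hd hij).mono Set.inter_subset_right Set.inter_subset_right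
  · exact fun i => (hS.inter (hCm i)).nullMeasurableSet

section Family

variable (hc : IsMECoupling Γ Λ X m act) {Γ' : Subgroup Γ} {Y' : Set X}
  (hY'm : MeasurableSet Y')
  (hY'cov : ∀ᵐ x ∂m, ∃ δ : Γ', act (↑δ) 1 x ∈ Y')
  (hY'disj : ∀ δ : Γ', δ ≠ 1 → m (Y' ∩ act (↑δ) 1 ⁻¹' Y') = 0)

include hc hY'm hY'cov hY'disj

theorem family_meas (ρ : Λ) (δ : Γ') : MeasurableSet (act (↑δ) ρ ⁻¹' Y') :=
  hY'm.preimage (hc.measurable_act _ _)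

theorem family_disj (ρ : Λ) :
    Pairwise (Function.onFun (AEDisjoint m) fun δ : Γ' => act (↑δ) ρ ⁻¹' Y') := by
  intro δ δ' hne
  have hset : act (↑δ) ρ ⁻¹' Y' ∩ act (↑δ') ρ ⁻¹' Y'
      = act (↑δ) ρ ⁻¹' (Y' ∩ act (↑(δ' * δ⁻¹)) 1 ⁻¹' Y') := by
    ext x
    simp only [Set.mem_inter_iff, Set.mem_preimage]
    have : act (↑(δ' * δ⁻¹)) 1 (act (↑δ) ρ x) = act (↑δ') ρ x := by
      rw [act_comp hc]
      push_cast
      rw [one_mul, inv_mul_cancel_right]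
    rw [this]
  have hμ : m (act (↑δ) ρ ⁻¹' Y' ∩ act (↑δ') ρ ⁻¹' Y') = 0 := by
    rw [hset, measure_preimage_act hc]
    have hne' : δ' * δ⁻¹ ≠ 1 := by
      intro h
      apply hne
      have : δ' * δ⁻¹ * δ = 1 * δ := by rw [h]
      rw [inv_mul_cancel_right, one_mul] at this
      exact this.symm
    exact hY'disj (δ' * δ⁻¹) hne'
  exact hμ

theorem family_cov (ρ : Λ) : ∀ᵐ x ∂m, ∃ δ : Γ', x ∈ act (↑δ) ρ ⁻¹' Y' := by
  have h := ae_act hc 1 ρ hY'cov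
  filter_upwards [h] with x hx
  obtain ⟨δ, hδ⟩ := hx
  refine ⟨δ, ?_⟩
  simpa [act_comp hc, Set.mem_preimage] using hδ

/-- Key exchange lemma: for a strictly `Γ'`-invariant measurable set `A`,
translating by `act 1 μ0` does not change the measure of `A ∩ Y'`. -/
theorem measure_translate_inter {A : Set X} (hA : MeasurableSet A)
    (hAinv : ∀ δ : Γ', act (↑δ) (1 : Λ) ⁻¹' A = A) (μ0 : Λ) :
    m (act (1 : Γ) μ0 ⁻¹' A ∩ Y') = m (A ∩ Y') := by
  have hterm : ∀ δ : Γ', (act (1 : Γ) μ0 ⁻¹' A ∩ Y') ∩ act (↑δ) μ0 ⁻¹' Y'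
      = act (↑δ) μ0 ⁻¹' ((A ∩ Y') ∩ act (↑(δ⁻¹)) μ0⁻¹ ⁻¹' Y') := by
    intro δ
    ext x
    have e1 : act (↑(δ⁻¹)) μ0⁻¹ (act (↑δ) μ0 x) = x := by
      rw [act_comp hc]
      push_cast
      rw [inv_mul_cancel, inv_mul_cancel, hc.act_one]
    have e2 : act (↑δ) (1 : Λ) (act (1 : Γ) μ0 x) = act (↑δ) μ0 x := by
      rw [act_comp hc, mul_one, one_mul]
    have e3 : (act (↑δ) μ0 x ∈ A) ↔ (act (1 : Γ) μ0 x ∈ A) := by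
      rw [← e2]
      have : act (1 : Γ) μ0 x ∈ act (↑δ) (1 : Λ) ⁻¹' A ↔ act (1 : Γ) μ0 x ∈ A := by
        rw [hAinv δ]
      simpa [Set.mem_preimage] using this
    simp only [Set.mem_inter_iff, Set.mem_preimage, e1, e3]
    tauto
  calc m (act (1 : Γ) μ0 ⁻¹' A ∩ Y')
      = ∑' δ : Γ', m ((act (1 : Γ) μ0 ⁻¹' A ∩ Y') ∩ act (↑δ) μ0 ⁻¹' Y') :=
        measure_eq_tsum_of_partition (family_meas hc hY'm hY'cov hY'disj μ0)
          (family_disj hc hY'm hY'cov hY'disj μ0) (family_cov hc hY'm hY'cov hY'disj μ0)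
          ((hA.preimage (hc.measurable_act _ _)).inter hY'm)
    _ = ∑' δ : Γ', m ((A ∩ Y') ∩ act (↑(δ⁻¹)) μ0⁻¹ ⁻¹' Y') := by
        refine tsum_congr fun δ => ?_
        rw [hterm δ, measure_preimage_act hc]
    _ = ∑' δ : Γ', m ((A ∩ Y') ∩ act (↑δ) μ0⁻¹ ⁻¹' Y') :=
        (Equiv.inv Γ').tsum_eq fun δ => m ((A ∩ Y') ∩ act (↑δ) μ0⁻¹ ⁻¹' Y')
    _ = m (A ∩ Y') :=
        (measure_eq_tsum_of_partition (family_meas hc hY'm hY'cov hY'disj μ0⁻¹)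
          (family_disj hc hY'm hY'cov hY'disj μ0⁻¹) (family_cov hc hY'm hY'cov hY'disj μ0⁻¹)
          (hA.inter hY'm)).symm

theorem measure_inter_ne_zero {A : Set X} (hA : MeasurableSet A)
    (hAinv : ∀ δ : Γ', act (↑δ) (1 : Λ) ⁻¹' A = A) (hApos : m A ≠ 0) :
    m (A ∩ Y') ≠ 0 := by
  intro h0
  apply hApos
  have := measure_eq_tsum_of_partition (family_meas hc hY'm hY'cov hY'disj 1)
    (family_disj hc hY'm hY'cov hY'disj 1) (family_cov hc hY'm hY'cov hY'disj 1) hA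
  rw [this]
  have hterm : ∀ δ : Γ', m (A ∩ act (↑δ) (1 : Λ) ⁻¹' Y') = m (A ∩ Y') := by
    intro δ
    have : A ∩ act (↑δ) (1 : Λ) ⁻¹' Y' = act (↑δ) (1 : Λ) ⁻¹' (A ∩ Y') := by
      rw [Set.preimage_inter, hAinv δ]
    rw [this, measure_preimage_act hc]
  simp [hterm, h0]

end Family

theorem exists_subgroup_fd (hc : IsMECoupling Γ Λ X m act) (Γ' : Subgroup Γ)
    [Γ'.FiniteIndex] :
    ∃ Y' : Set X, MeasurableSet Y' ∧ m Y' < ⊤ ∧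
      (∀ᵐ x ∂m, ∃ δ : Γ', act (↑δ) 1 x ∈ Y') ∧
      ∀ δ : Γ', δ ≠ 1 → m (Y' ∩ act (↑δ) 1 ⁻¹' Y') = 0 := by
  obtain ⟨Y, hYm, hYfin, hYcov, hYdisj⟩ := hc.exists_fundamentalDomain_left
  haveI : Finite (Γ ⧸ Γ') := Γ'.finite_quotient_of_finiteIndex
  haveI : Fintype (Γ ⧸ Γ') := Fintype.ofFinite _
  refine ⟨⋃ q : Γ ⧸ Γ', act q.out 1 ⁻¹' Y, MeasurableSet.iUnion fun q =>
    hYm.preimage (hc.measurable_act _ _), ?_, ?_, ?_⟩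
  · refine lt_of_le_of_lt (measure_iUnion_le _) ?_
    have hq : ∀ q : Γ ⧸ Γ', m (act q.out 1 ⁻¹' Y) = m Y := fun q => measure_preimage_act hc _ _ _
    rw [tsum_fintype]
    simp only [hq]
    exact ENNReal.sum_lt_top.2 fun _ _ => hYfin
  · filter_upwards [hYcov] with x hx
    obtain ⟨g, hg⟩ := hx
    obtain ⟨h, hh⟩ := QuotientGroup.mk_out_eq_mul Γ' g
    refine ⟨h⁻¹, Set.mem_iUnion.2 ⟨QuotientGroup.mk g, ?_⟩⟩
    show act (QuotientGroup.mk g : Γ ⧸ Γ').out 1 (act (↑h⁻¹) 1 x) ∈ Y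
    rw [act_comp hc, hh, one_mul]
    have e : g * ↑h * ↑h⁻¹ = g := by push_cast; rw [mul_inv_cancel_right]
    rw [e]
    exact hg
  · intro δ hδ
    have hsub : (⋃ q : Γ ⧸ Γ', act q.out 1 ⁻¹' Y) ∩
        act (↑δ) 1 ⁻¹' (⋃ q : Γ ⧸ Γ', act q.out 1 ⁻¹' Y) ⊆
        ⋃ q : Γ ⧸ Γ', ⋃ q' : Γ ⧸ Γ',
          (act q.out 1 ⁻¹' Y ∩ act (↑δ) 1 ⁻¹' (act q'.out 1 ⁻¹' Y)) := by
      rintro x ⟨hx1, hx2⟩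
      obtain ⟨q, hq⟩ := Set.mem_iUnion.1 hx1
      obtain ⟨q', hq'⟩ := Set.mem_iUnion.1 hx2
      exact Set.mem_iUnion.2 ⟨q, Set.mem_iUnion.2 ⟨q', hq, hq'⟩⟩
    refine measure_mono_null hsub (measure_iUnion_null fun q => measure_iUnion_null fun q' => ?_)
    set a : Γ := q.out with ha
    set b : Γ := q'.out * ↑δ with hb
    have hab : a ≠ b := by
      intro h
      have hqq : q = q' := by
        have h1 : (QuotientGroup.mk a : Γ ⧸ Γ') = QuotientGroup.mk q'.out :=
          h ▸ QuotientGroup.mk_mul_of_mem q'.out δ.2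
        rw [ha] at h1
        rw [QuotientGroup.out_eq', QuotientGroup.out_eq'] at h1
        exact h1
      apply hδ
      rw [ha, hb, hqq] at h
      have : (↑δ : Γ) = 1 := by
        have := mul_left_cancel (a := q'.out) (b := (1:Γ)) (c := ↑δ) (by rw [mul_one, ← h])
        exact this.symm
      exact OneMemClass.coe_eq_one.1 this
    have hset : act a 1 ⁻¹' Y ∩ act (↑δ) 1 ⁻¹' (act q'.out 1 ⁻¹' Y)
        = act a 1 ⁻¹' (Y ∩ act (b * a⁻¹) 1 ⁻¹' Y) := by
      ext x
      have e1 : act q'.out 1 (act (↑δ) 1 x) = act b 1 x := by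
        rw [act_comp hc, mul_one]
      have e2 : act (b * a⁻¹) 1 (act a 1 x) = act b 1 x := by
        rw [act_comp hc, mul_one]
        congr 1
        group
      simp only [Set.mem_inter_iff, Set.mem_preimage, e1, e2]
    rw [hset, measure_preimage_act hc]
    refine hYdisj (b * a⁻¹) fun h => hab ?_
    have : b * a⁻¹ * a = 1 * a := by rw [h]
    rw [inv_mul_cancel_right, one_mul] at this
    exact this.symm

theorem ae_conj (hc : IsMECoupling Γ Λ X m act) {Γ' : Subgroup Γ} {Λ' : Subgroup Λ}
    (hΓ'n : Γ'.Normal) (hΛ'n : Λ'.Normal)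
    (π : Γ →* G) (τ : Λ →* G) (Φ : X → G)
    (hΦ : ∀ γ ∈ Γ', ∀ l ∈ Λ', ∀ᵐ x ∂m, Φ (act γ l x) = π γ * Φ x * (τ l)⁻¹)
    (γ : Γ) (l : Λ) {γ' : Γ} (hγ' : γ' ∈ Γ') {lam : Λ} (hlam : lam ∈ Λ') :
    ∀ᵐ x ∂m, (Φ (act γ' lam x))⁻¹ * (π γ)⁻¹ * Φ (act γ l (act γ' lam x)) * τ l
      = τ lam * ((Φ x)⁻¹ * (π γ)⁻¹ * Φ (act γ l x) * τ l) * (τ lam)⁻¹ := by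
  have hγ'' : γ * γ' * γ⁻¹ ∈ Γ' := hΓ'n.conj_mem γ' hγ' γ
  have hlam' : l * lam * l⁻¹ ∈ Λ' := hΛ'n.conj_mem lam hlam l
  filter_upwards [hΦ γ' hγ' lam hlam, ae_act hc γ l (hΦ _ hγ'' _ hlam')] with x h1 h2
  have hx : act γ l (act γ' lam x) = act (γ * γ' * γ⁻¹) (l * lam * l⁻¹) (act γ l x) := by
    rw [act_comp hc, act_comp hc]
    have e1 : γ * γ' * γ⁻¹ * γ = γ * γ' := by group
    have e2 : l * lam * l⁻¹ * l = l * lam := by group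
    rw [e1, e2]
  rw [hx, h2, h1]
  simp only [map_mul, map_inv, mul_inv_rev, inv_inv]
  group

end MEAux

/-- Extension of equivariance from finite-index normal subgroups: if `Γ' ⊴ Γ` and
`Λ' ⊴ Λ` have finite index, `τ` restricted to `Λ'` is ICC, and a Borel map
`Φ : Σ → G` on an ME coupling of `Γ` and `Λ` is almost `Γ' × Λ'`-equivariant, then
`Φ` is almost `Γ × Λ`-equivariant. -/
theorem equivariant_map_extend {Γ Λ G X : Type} [Group Γ] [Countable Γ]
    [Group Λ] [Countable Λ] [Group G] [Countable G]
    [MeasurableSpace G] [DiscreteMeasurableSpace G]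
    [MeasurableSpace X] [StandardBorelSpace X]
    (m : Measure X) (act : Γ → Λ → X → X) (hc : IsMECoupling Γ Λ X m act)
    (π : Γ →* G) (τ : Λ →* G)
    (Γ' : Subgroup Γ) (Λ' : Subgroup Λ) (hΓ'n : Γ'.Normal) (hΛ'n : Λ'.Normal)
    (hΓ'f : Γ'.FiniteIndex) (hΛ'f : Λ'.FiniteIndex)
    (hicc : IsICC (τ.comp Λ'.subtype))
    (Φ : X → G) (hΦmeas : Measurable Φ)
    (hΦ : ∀ γ ∈ Γ', ∀ l ∈ Λ', ∀ᵐ x ∂m, Φ (act γ l x) = π γ * Φ x * (τ l)⁻¹) :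
    ∀ (γ : Γ) (l : Λ), ∀ᵐ x ∂m, Φ (act γ l x) = π γ * Φ x * (τ l)⁻¹ := by
  classical
  intro γ l
  haveI := hΓ'f
  set E : X → G := fun x => (Φ x)⁻¹ * (π γ)⁻¹ * Φ (act γ l x) * τ l with hEdef
  have hEmeas : Measurable E := by
    have h1 : Measurable fun x => (Φ x, Φ (act γ l x)) :=
      hΦmeas.prodMk (hΦmeas.comp (hc.measurable_act γ l))
    exact (measurable_of_countable fun p : G × G => p.1⁻¹ * (π γ)⁻¹ * p.2 * τ l).comp h1
  have hconj : ∀ (γ' : Γ), γ' ∈ Γ' → ∀ (lam : Λ), lam ∈ Λ' →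
      ∀ᵐ x ∂m, E (act γ' lam x) = τ lam * E x * (τ lam)⁻¹ := by
    intro γ' hγ' lam hlam
    have h := MEAux.ae_conj hc hΓ'n hΛ'n π τ Φ hΦ γ l hγ' hlam
    filter_upwards [h] with x hx
    simpa only [hEdef] using hx
  suffices hkey : ∀ᵐ x ∂m, E x = 1 by
    filter_upwards [hkey] with x hx
    simp only [hEdef] at hx
    have h2 : Φ (act γ l x) =
        π γ * Φ x * ((Φ x)⁻¹ * (π γ)⁻¹ * Φ (act γ l x) * τ l) * (τ l)⁻¹ := by group
    rw [hx, mul_one] at h2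
    exact h2
  by_contra hcon
  have hNpos : m {x | ¬ E x = 1} ≠ 0 := by rwa [ae_iff] at hcon
  obtain ⟨d, hd1, hdpos⟩ : ∃ d : G, d ≠ 1 ∧ m {x | E x = d} ≠ 0 := by
    by_contra h
    push_neg at h
    apply hNpos
    have hsub : {x | ¬ E x = 1} ⊆ ⋃ d : {g : G // g ≠ 1}, {x | E x = (d : G)} :=
      fun x hx => Set.mem_iUnion.2 ⟨⟨E x, hx⟩, rfl⟩
    exact measure_mono_null hsub (measure_iUnion_null fun d => h d d.2)
  obtain ⟨Y', hY'm, hY'fin, hY'cov, hY'disj⟩ := MEAux.exists_subgroup_fd hc Γ'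
  set A : Set X := {x | E x = d} with hAdef
  have hAm : MeasurableSet A := hEmeas (measurableSet_singleton d)
  set A' : Set X := ⋂ δ : Γ', act (↑δ) (1 : Λ) ⁻¹' A with hA'def
  have hA'm : MeasurableSet A' :=
    MeasurableSet.iInter fun δ => hAm.preimage (hc.measurable_act _ _)
  have hA'sub : A' ⊆ A := by
    intro x hx
    have h := Set.mem_iInter.1 hx (1 : Γ')
    simpa [hc.act_one] using h
  have hinv_ae : ∀ δ : Γ', ∀ᵐ x ∂m, (act (↑δ) (1 : Λ) x ∈ A ↔ x ∈ A) := by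
    intro δ
    have h := hconj ↑δ δ.2 1 Λ'.one_mem
    filter_upwards [h] with x hx
    simp only [map_one, one_mul, inv_one, mul_one] at hx
    show (E (act (↑δ) (1 : Λ) x) = d) ↔ (E x = d)
    rw [hx]
  have hA'A_null : m (A \ A') = 0 := by
    have hsub : A \ A' ⊆ ⋃ δ : Γ', {x | ¬ (act (↑δ) (1 : Λ) x ∈ A ↔ x ∈ A)} := by
      rintro x ⟨hxA, hxA'⟩
      rw [hA'def, Set.mem_iInter] at hxA'
      push_neg at hxA'
      obtain ⟨δ, hδ⟩ := hxA'
      exact Set.mem_iUnion.2 ⟨δ, fun hiff => hδ (Set.mem_preimage.2 (hiff.2 hxA))⟩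
    exact measure_mono_null hsub (measure_iUnion_null fun δ => ae_iff.1 (hinv_ae δ))
  have hA'pos : m A' ≠ 0 := by
    intro h0
    apply hdpos
    have hle : m A ≤ m A' + m (A \ A') := by
      refine le_trans (measure_mono ?_) (measure_union_le _ _)
      intro x hx
      by_cases h : x ∈ A'
      exacts [Or.inl h, Or.inr ⟨hx, h⟩]
    rw [h0, hA'A_null, add_zero] at hle
    exact le_zero_iff.1 hle
  have hA'inv : ∀ δ : Γ', act (↑δ) (1 : Λ) ⁻¹' A' = A' := by
    intro δ0
    ext x
    simp only [hA'def, Set.mem_preimage, Set.mem_iInter]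
    constructor
    · intro h δ
      have h2 := h (δ * δ0⁻¹)
      have harg : (↑(δ * δ0⁻¹) : Γ) * ↑δ0 = (↑δ : Γ) := by
        push_cast
        group
      have e : act (↑(δ * δ0⁻¹)) (1 : Λ) (act (↑δ0) (1 : Λ) x) = act (↑δ) (1 : Λ) x := by
        rw [MEAux.act_comp hc, mul_one, harg]
      rwa [e] at h2
    · intro h δ
      have h2 := h (δ * δ0)
      have harg : (↑δ : Γ) * ↑δ0 = (↑(δ * δ0) : Γ) := by
        push_cast
        group
      have e : act (↑δ) (1 : Λ) (act (↑δ0) (1 : Λ) x) = act (↑(δ * δ0)) (1 : Λ) x := by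
        rw [MEAux.act_comp hc, mul_one, harg]
      rw [e]
      exact h2
  have hc0 : m (A' ∩ Y') ≠ 0 :=
    MEAux.measure_inter_ne_zero hc hY'm hY'cov hY'disj hA'm hA'inv hA'pos
  have hAA'ae : ∀ᵐ y ∂m, (y ∈ A' ↔ y ∈ A) := by
    rw [ae_iff]
    refine measure_mono_null ?_ hA'A_null
    intro x hx
    simp only [Set.mem_setOf_eq] at hx
    have hxA : x ∈ A := by
      by_contra h
      exact hx ⟨fun h' => absurd (hA'sub h') h, fun h' => absurd h' h⟩
    have hxA' : x ∉ A' := fun h' => hx ⟨fun _ => hA'sub h', fun _ => h'⟩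
    exact ⟨hxA, hxA'⟩
  have hval : ∀ lam : Λ', m ({x | E x = τ ↑lam * d * (τ ↑lam)⁻¹} ∩ Y') = m (A' ∩ Y') := by
    intro lam
    have htr := MEAux.measure_translate_inter hc hY'm hY'cov hY'disj hA'm hA'inv
      ((↑(lam⁻¹) : Λ))
    rw [← htr]
    apply measure_congr
    have h1 := hconj 1 Γ'.one_mem (↑(lam⁻¹) : Λ) (lam⁻¹).2
    have h2 := MEAux.ae_act hc 1 (↑(lam⁻¹) : Λ) hAA'ae
    rw [Filter.eventuallyEq_set]
    filter_upwards [h1, h2] with x hx1 hx2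
    simp only [Set.mem_inter_iff, Set.mem_preimage, Set.mem_setOf_eq]
    have hiff : (E x = τ ↑lam * d * (τ ↑lam)⁻¹) ↔ act (1 : Γ) (↑(lam⁻¹) : Λ) x ∈ A' := by
      rw [hx2]
      show (E x = τ ↑lam * d * (τ ↑lam)⁻¹) ↔ E (act (1 : Γ) (↑(lam⁻¹) : Λ) x) = d
      rw [hx1]
      have e : τ (↑(lam⁻¹) : Λ) = (τ ↑lam)⁻¹ := by
        push_cast
        rw [map_inv]
      rw [e, inv_inv]
      constructor
      · intro h
        rw [h]
        group
      · intro h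
        rw [← h]
        group
    rw [hiff]
  have hpart : m Y' = ∑' g : G, m ({x | E x = g} ∩ Y') := by
    have hp := MEAux.measure_eq_tsum_of_partition (m := m) (C := fun g : G => {x | E x = g})
      (fun g => hEmeas (measurableSet_singleton g))
      (fun g g' hgg' => by
        have he : {x | E x = g} ∩ {x | E x = g'} = ∅ := by
          ext x
          simp only [Set.mem_inter_iff, Set.mem_setOf_eq, Set.mem_empty_iff_false, iff_false,
            not_and]
          intro h1 h2
          exact hgg' (h1 ▸ h2 ▸ rfl)
        show m ({x | E x = g} ∩ {x | E x = g'}) = 0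
        rw [he, measure_empty])
      (Filter.Eventually.of_forall fun x => ⟨E x, rfl⟩) hY'm
    rw [hp]
    exact tsum_congr fun g => by rw [Set.inter_comm]
  have hinf := hicc d hd1
  let e := hinf.natEmbedding
  have hinj : Function.Injective fun n : ℕ => ((e n : _) : G) :=
    fun a b hab => e.injective (Subtype.coe_injective hab)
  have heq : ∀ n : ℕ, m ({x | E x = ((e n : _) : G)} ∩ Y') = m (A' ∩ Y') := by
    intro n
    obtain ⟨lam, hlam⟩ := (e n).2
    have he2 : τ.comp Λ'.subtype lam = τ ↑lam := rfl
    rw [← hlam, he2]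
    exact hval lam
  have htop : (∑' g : G, m ({x | E x = g} ∩ Y')) = ⊤ := by
    refine top_le_iff.1 ?_
    calc (⊤ : ENNReal) = ∑' _ : ℕ, m (A' ∩ Y') :=
          (ENNReal.tsum_const_eq_top_of_ne_zero hc0).symm
      _ = ∑' n : ℕ, m ({x | E x = ((e n : _) : G)} ∩ Y') := by
          exact tsum_congr fun n => (heq n).symm
      _ ≤ ∑' g : G, m ({x | E x = g} ∩ Y') :=
          ENNReal.tsum_comp_le_tsum_of_injective hinj _
  rw [hpart, htop] at hY'fin
  exact absurd hY'fin (lt_irrefl _)
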